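/- Let A be a primitive J(α,β)-axial algebra satisfying the (⋆) condition, with Frobenius form (·,·) normalized so that (c,c) = 1 for every primitive axis c. Let a ∈ A be a primitive axis and let d, f ∈ A, written as d = γ·a + d_α + d_β and f = ε·a + f_α + f_β with γ, ε ∈ F, d_α, f_α ∈ A_α(a), d_β, f_β ∈ A_β(a). Then (d_α, f_α) = (γε(β−1) − β(d,f) + (a, df))/(α−β) and (d_β, f_β) = −(γε(α−1) − α(d,f) + (a, df))/(α−β). -/

import Mathlib

variable (F : Type*) [Field F] (A : Type*) [NonUnitalNonAssocCommRing A]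
  [Module F A] [SMulCommClass F A A] [IsScalarTower F A A]

/-- The `l`-eigenspace of the left multiplication operator `ad_a`. -/
def eigSp (a : A) (l : F) : Submodule F A where
  carrier := {x | a * x = l • x}
  add_mem' := by
    intro x y hx hy
    simp only [Set.mem_setOf_eq] at *
    rw [mul_add, hx, hy, smul_add]
  zero_mem' := by simp
  smul_mem' := by
    intro c x hx
    simp only [Set.mem_setOf_eq] at *
    rw [mul_smul_comm, hx, smul_comm]

/-- `a` is a `J(α,β)`-axis: an idempotent whose adjoint is semisimple with
eigenvalues among `1, α, β`, satisfying the fusion law `J(α,β)`. -/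
structure IsJAxis (α β : F) (a : A) : Prop where
  idem : a * a = a
  decomp : eigSp F A a 1 ⊔ eigSp F A a α ⊔ eigSp F A a β = ⊤
  f11 : ∀ x ∈ eigSp F A a 1, ∀ y ∈ eigSp F A a 1, x * y ∈ eigSp F A a 1
  f1a : ∀ x ∈ eigSp F A a 1, ∀ y ∈ eigSp F A a α, x * y ∈ eigSp F A a α
  f1b : ∀ x ∈ eigSp F A a 1, ∀ y ∈ eigSp F A a β, x * y ∈ eigSp F A a β
  faa : ∀ x ∈ eigSp F A a α, ∀ y ∈ eigSp F A a α, x * y ∈ eigSp F A a 1 ⊔ eigSp F A a α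
  fab : ∀ x ∈ eigSp F A a α, ∀ y ∈ eigSp F A a β, x * y ∈ eigSp F A a β
  fbb : ∀ x ∈ eigSp F A a β, ∀ y ∈ eigSp F A a β, x * y ∈ eigSp F A a 1 ⊔ eigSp F A a α

/-- A primitive `J(α,β)`-axis: `A_1(a) = F·a`. -/
def IsPrimJAxis (α β : F) (a : A) : Prop :=
  IsJAxis F A α β a ∧ eigSp F A a 1 = Submodule.span F {a}

/-- `A` is a primitive `J(α,β)`-axial algebra: generated as an `F`-algebra by a
set of primitive `J(α,β)`-axes. -/
def IsJAxialAlg (α β : F) : Prop :=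
  ∃ S : Set A, (∀ a ∈ S, IsPrimJAxis F A α β a) ∧ NonUnitalAlgebra.adjoin F S = ⊤

/-- The `(⋆)` condition: for any two primitive axes `a, b`, writing
`b = x • a + bα + bβ`, the projection of `a` onto `A_1(b)` equals `x • b`. -/
def StarCond (α β : F) : Prop :=
  ∀ a b : A, IsPrimJAxis F A α β a → IsPrimJAxis F A α β b →
    ∀ x : F, ∀ bα ∈ eigSp F A a α, ∀ bβ ∈ eigSp F A a β, b = x • a + bα + bβ →
      ∃ aα ∈ eigSp F A b α, ∃ aβ ∈ eigSp F A b β, a = x • b + aα + aβ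

/-- A Frobenius form: a nonzero symmetric bilinear form that associates with
the product. -/
def IsFrobenius (B : A →ₗ[F] A →ₗ[F] F) : Prop :=
  B ≠ 0 ∧ (∀ u v, B u v = B v u) ∧ ∀ u v w, B u (v * w) = B (u * v) w

/-- `τ` is the Miyamoto involution associated to the axis `a`: it fixes
`A_1(a) ⊕ A_α(a)` pointwise and negates `A_β(a)`. -/
def IsMiyamoto (α β : F) (a : A) (τ : A →ₗ[F] A) : Prop :=
  (∀ x ∈ eigSp F A a 1 ⊔ eigSp F A a α, τ x = x) ∧ ∀ x ∈ eigSp F A a β, τ x = -x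

theorem form_of_projections (α β : F) (h2 : (2 : F) ≠ 0)
    (hα1 : α ≠ 1) (hβ1 : β ≠ 1) (hαβ : α ≠ β)
    (hA : IsJAxialAlg F A α β) (hstar : StarCond F A α β)
    (B : A →ₗ[F] A →ₗ[F] F) (hB : IsFrobenius F A B)
    (hBnorm : ∀ c : A, IsPrimJAxis F A α β c → B c c = 1)
    (a : A) (ha : IsPrimJAxis F A α β a)
    (d f : A) (γ ε : F) (dα dβ fα fβ : A)
    (hdα : dα ∈ eigSp F A a α) (hdβ : dβ ∈ eigSp F A a β)
    (hfα : fα ∈ eigSp F A a α) (hfβ : fβ ∈ eigSp F A a β)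
    (hd : d = γ • a + dα + dβ) (hf : f = ε • a + fα + fβ) :
    B dα fα = (γ * ε * (β - 1) - β * B d f + B a (d * f)) / (α - β) ∧
    B dβ fβ = -((γ * ε * (α - 1) - α * B d f + B a (d * f)) / (α - β)) := by
  obtain ⟨hBne, hsym, hassoc⟩ := hB
  have haa : a * a = a := ha.1.idem
  have hBaa : B a a = 1 := hBnorm a ha
  have hda : a * dα = α • dα := hdα
  have hdb : a * dβ = β • dβ := hdβ
  have hfa : a * fα = α • fα := hfα
  have hfb : a * fβ = β • fβ := hfβ
  -- orthogonality of distinct eigenspaces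
  have ortho : ∀ (l m : F) (x y : A), a * x = l • x → a * y = m • y → l ≠ m →
      B x y = 0 := by
    intro l m x y hx hy hlm
    have h1 : m • B x y = l • B x y := by
      have h := hassoc x a y
      rw [hy, mul_comm x a, hx] at h
      simpa using h
    have h2 : (m - l) * B x y = 0 := by
      rw [sub_mul, ← smul_eq_mul, ← smul_eq_mul, h1, sub_self]
    rcases mul_eq_zero.mp h2 with h3 | h3
    · exact absurd (sub_eq_zero.mp h3) (Ne.symm hlm)
    · exact h3
  -- B a x = 0 for eigenvectors with eigenvalue ≠ 1
  have Ba0 : ∀ (l : F) (x : A), a * x = l • x → l ≠ 1 → B a x = 0 := by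
    intro l x hx hl
    have h1 : l • B a x = B a x := by
      have h := hassoc a a x
      rw [hx, haa] at h
      simpa using h
    have h2 : (l - 1) * B a x = 0 := by
      rw [sub_mul, ← smul_eq_mul, h1, one_mul, sub_self]
    rcases mul_eq_zero.mp h2 with h3 | h3
    · exact absurd (sub_eq_zero.mp h3) hl
    · exact h3
  have hBada : B a dα = 0 := Ba0 α dα hda hα1
  have hBadb : B a dβ = 0 := Ba0 β dβ hdb hβ1
  have hBafa : B a fα = 0 := Ba0 α fα hfa hα1
  have hBafb : B a fβ = 0 := Ba0 β fβ hfb hβ1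
  have hBdaa : B dα a = 0 := by rw [hsym]; exact hBada
  have hBdba : B dβ a = 0 := by rw [hsym]; exact hBadb
  have hdafb : B dα fβ = 0 := ortho α β dα fβ hda hfb hαβ
  have hdbfa : B dβ fα = 0 := ortho β α dβ fα hdb hfa (Ne.symm hαβ)
  set X := B dα fα with hX
  set Y := B dβ fβ with hY
  -- B dα f and B dβ f
  have hBdaf : B dα f = X := by
    rw [hf]
    simp [map_add, map_smul, hBdaa, hdafb]
    exact hX.symm
  have hBdbf : B dβ f = Y := by
    rw [hf]
    simp [map_add, map_smul, hBdba, hdbfa]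
    exact hY.symm
  have hBaf : B a f = ε := by
    rw [hf]
    simp [map_add, map_smul, hBaa, hBafa, hBafb]
  -- B d f
  have hBdf : B d f = γ * ε + X + Y := by
    rw [hd, map_add, map_add, map_smul]
    simp only [LinearMap.add_apply, LinearMap.smul_apply, hBaf, hBdaf, hBdbf,
      smul_eq_mul]
  -- B a (d * f)
  have had : a * d = γ • a + α • dα + β • dβ := by
    rw [hd, mul_add, mul_add, mul_smul_comm, haa, hda, hdb]
  have hBadf : B a (d * f) = γ * ε + α * X + β * Y := by
    rw [hassoc, had, map_add, map_add, map_smul, map_smul, map_smul]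
    simp only [LinearMap.add_apply, LinearMap.smul_apply, hBaf, hBdaf, hBdbf,
      smul_eq_mul]
  have hab : α - β ≠ 0 := sub_ne_zero.mpr hαβ
  constructor
  · rw [hBdf, hBadf]
    field_simp
    ring
  · rw [hBdf, hBadf]
    field_simp
    ring
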